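/- Let T be a triangulated category, let F be an object, and let ⟨F⟩ denote the smallest strictly full saturated triangulated subcategory containing F. Then for any object E, the following are equivalent: (i) Hom(F, E[r]) = 0 for all integers r; (ii) Hom(F', E) = 0 for all F' ∈ ⟨F⟩. -/

import Mathlib

open CategoryTheory Limits Pretriangulated

variable {C : Type*} [Category C] [Preadditive C] [HasZeroObject C] [HasShift C ℤ]
  [∀ n : ℤ, (shiftFunctor C n).Additive] [Pretriangulated C]

/-- A set of objects `P` of a pretriangulated category is *thick-closed* if it is closed
under isomorphisms, shifts, cones of distinguished triangles (so it underlies a strictly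
full triangulated subcategory) and under direct summands (retracts), i.e. it is
*saturated*. -/
def IsThickClosed (P : Set C) : Prop :=
  (∀ X Y : C, (X ≅ Y) → X ∈ P → Y ∈ P) ∧
  (∀ (X : C) (n : ℤ), X ∈ P → (X⟦n⟧ ∈ P)) ∧
  (∀ T ∈ distTriang C, T.obj₁ ∈ P → T.obj₂ ∈ P → T.obj₃ ∈ P) ∧
  (∀ X Z : C, Z ∈ P → ∀ (i : X ⟶ Z) (r : Z ⟶ X), i ≫ r = 𝟙 X → X ∈ P)

/-- The smallest strictly full saturated triangulated subcategory (as a set of objects)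
containing a given set `S` of objects. -/
def thickClosure (S : Set C) : Set C :=
  {X | ∀ P : Set C, S ⊆ P → IsThickClosed P → X ∈ P}

/-- Auxiliary: the set of objects with no nonzero maps to any shift of `E` is thick-closed. -/
lemma isThickClosed_homVanishing (E : C) :
    IsThickClosed {X : C | ∀ n : ℤ, ∀ φ : X ⟶ E⟦n⟧, φ = 0} := by
  have hshift : ∀ (X : C) (n : ℤ), (∀ m : ℤ, ∀ φ : X ⟶ E⟦m⟧, φ = 0) →
      ∀ m : ℤ, ∀ φ : X⟦n⟧ ⟶ E⟦m⟧, φ = 0 := by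
    intro X n hX m φ
    have adj := (shiftEquiv C n).toAdjunction
    have h1 : adj.homEquiv X (E⟦m⟧) φ ≫ (shiftFunctorAdd' C m (-n) (m - n) (by ring)).inv.app E
        = 0 := hX _ _
    replace h1 := (Iso.cancel_iso_inv_right _ _ ((shiftFunctorAdd' C m (-n) (m - n) (by ring)).app E)).mp
      (h1.trans zero_comp.symm)
    have := (adj.homEquiv X (E⟦m⟧)).symm_apply_apply φ
    rw [h1] at this
    rw [← this]
    simp [Adjunction.homEquiv]
    show (shiftFunctor C n).map 0 ≫ _ = 0
    rw [Functor.map_zero]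
    exact zero_comp
  refine ⟨?_, ?_, ?_, ?_⟩
  · rintro X Y e hX n φ
    have : e.hom ≫ φ = 0 := hX n _
    rw [← Preadditive.IsIso.comp_left_eq_zero e.hom] ; exact this
  · intro X n hX; exact hshift X n hX
  · intro T hT h1 h2 n φ
    obtain ⟨g, hg⟩ := Triangle.yoneda_exact₃ T hT φ (h2 n _)
    rw [hg, hshift T.obj₁ 1 h1 n g, comp_zero]
  · intro X Z hZ i r hir n φ
    have : φ = i ≫ (r ≫ φ) := by rw [← Category.assoc, hir, Category.id_comp]
    rw [this, hZ n (r ≫ φ), comp_zero]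

/-- For objects `F`, `E` of a pretriangulated category `T`, the following
are equivalent: (i) `Hom(F, E[r]) = 0` for all `r ∈ ℤ`; (ii) `Hom(F', E) = 0` for all
`F'` in `⟨F⟩`, the smallest strictly full saturated triangulated subcategory containing
`F`. -/
theorem hom_shift_vanishing_iff_thickClosure (F E : C) :
    (∀ r : ℤ, ∀ φ : F ⟶ E⟦r⟧, φ = 0) ↔
      (∀ F' ∈ thickClosure ({F} : Set C), ∀ φ : F' ⟶ E, φ = 0) := by
  constructor
  · intro h F' hF' φ
    have hmem : F' ∈ {X : C | ∀ n : ℤ, ∀ ψ : X ⟶ E⟦n⟧, ψ = 0} :=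
      hF' _ (by simpa using h) (isThickClosed_homVanishing E)
    have h0 : φ ≫ (shiftFunctorZero C ℤ).inv.app E = 0 := hmem 0 _
    rwa [Preadditive.IsIso.comp_right_eq_zero] at h0
  · intro h r φ
    have hmem : (F⟦-r⟧ : C) ∈ thickClosure ({F} : Set C) := by
      intro P hSP hP
      exact hP.2.1 F (-r) (hSP rfl)
    have adj := (shiftEquiv' C (-r) r (by ring)).toAdjunction
    have h1 : (adj.homEquiv F E).symm φ = 0 := h _ hmem _
    have := (adj.homEquiv F E).apply_symm_apply φ
    rw [h1] at this
    rw [← this]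
    simp [Adjunction.homEquiv]
    rfl
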